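/- Let A be a Hopf algebra over a commutative ring k and let (∂^{(i)})_{i ≥ 0} be a Hasse–Schmidt derivation on A which is compatible with the Hopf structure in the sense that for all a ∈ A and i ≥ 0: Δ(∂^{(i)}a) = Σ_{j=0}^{i} (∂^{(j)} ⊗ ∂^{(i−j)})(Δa), S(∂^{(i)}a) = ∂^{(i)}(S a), and ε(∂^{(i)}a) = 0 whenever i ≥ 1 and ε(a) = 0. If I is an ideal of A satisfying ∂^{(i)}(I) ⊆ I for all i ≥ 0, then the largest Hopf ideal H(I) contained in I also satisfies ∂^{(i)}(H(I)) ⊆ H(I) for all i ≥ 0. -/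

import Mathlib

open TensorProduct

/-- An ideal `I` of a (commutative) Hopf algebra `A` over a commutative ring `k` is a
*Hopf ideal* if `Δ(I) ⊆ I ⊗ A + A ⊗ I`, `ε(I) = 0` and `S(I) ⊆ I`. -/
def IsHopfIdeal (k : Type*) {A : Type*} [CommRing k] [CommRing A] [HopfAlgebra k A]
    (I : Ideal A) : Prop :=
  (∀ a ∈ I, Coalgebra.comul (R := k) a ∈
      Submodule.map₂ (TensorProduct.mk k A A) (I.restrictScalars k) (⊤ : Submodule k A) ⊔
      Submodule.map₂ (TensorProduct.mk k A A) (⊤ : Submodule k A) (I.restrictScalars k)) ∧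
  (∀ a ∈ I, Coalgebra.counit (R := k) a = 0) ∧
  (∀ a ∈ I, HopfAlgebra.antipode (R := k) a ∈ I)

/-- `H(I)`: the sum of all Hopf ideals of `A` contained in the ideal `I`, i.e. the largest
Hopf ideal contained in `I`. -/
def largestHopfIdealIn (k : Type*) {A : Type*} [CommRing k] [CommRing A] [HopfAlgebra k A]
    (I : Ideal A) : Ideal A :=
  sSup {J : Ideal A | IsHopfIdeal k J ∧ J ≤ I}

section AuxHopf

lemma HSD_sum4_comm {ι₁ ι₂ : Type*} {κ₁ : ι₁ → Type*} {κ₂ : ι₂ → Type*} {M : Type*}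
    [AddCommMonoid M]
    (s : Finset ι₁) (t : ∀ i, Finset (κ₁ i)) (u : Finset ι₂) (v : ∀ j, Finset (κ₂ j))
    (F : (i : ι₁) → κ₁ i → (j : ι₂) → κ₂ j → M) :
    ∑ i ∈ s, ∑ p ∈ t i, ∑ j ∈ u, ∑ r ∈ v j, F i p j r
      = ∑ j ∈ u, ∑ r ∈ v j, ∑ i ∈ s, ∑ p ∈ t i, F i p j r := by
  have h1 : ∑ x ∈ s.sigma t, ∑ y ∈ u.sigma v, F x.1 x.2 y.1 y.2
      = ∑ i ∈ s, ∑ p ∈ t i, ∑ j ∈ u, ∑ r ∈ v j, F i p j r := by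
    rw [Finset.sum_sigma]
    exact Finset.sum_congr rfl fun i _ => Finset.sum_congr rfl fun p _ => by
      rw [Finset.sum_sigma]
  have h2 : ∑ y ∈ u.sigma v, ∑ x ∈ s.sigma t, F x.1 x.2 y.1 y.2
      = ∑ j ∈ u, ∑ r ∈ v j, ∑ i ∈ s, ∑ p ∈ t i, F i p j r := by
    rw [Finset.sum_sigma]
    exact Finset.sum_congr rfl fun j _ => Finset.sum_congr rfl fun r _ => by
      rw [Finset.sum_sigma]
  rw [← h1, ← h2]
  exact Finset.sum_comm

namespace HSDaux

open Coalgebra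

variable {k A : Type*} [CommRing k] [CommRing A] [HopfAlgebra k A]

/-- Convolution product on `Hom(A ⊗ A, A)`. -/
noncomputable def conv (f g : A ⊗[k] A →ₗ[k] A) : A ⊗[k] A →ₗ[k] A :=
  LinearMap.mul' k A ∘ₗ TensorProduct.map f g ∘ₗ
    (TensorProduct.tensorTensorTensorComm k A A A A).toLinearMap ∘ₗ
    TensorProduct.map (Coalgebra.comul) (Coalgebra.comul)

lemma conv_tmul (f g : A ⊗[k] A →ₗ[k] A) (a b : A) {ι₁ ι₂ : Type*}
    (ra : Coalgebra.Repr k a ι₁) (rb : Coalgebra.Repr k b ι₂) :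
    conv f g (a ⊗ₜ[k] b) =
      ∑ i ∈ ra.index, ∑ j ∈ rb.index,
        f (ra.left i ⊗ₜ[k] rb.left j) * g (ra.right i ⊗ₜ[k] rb.right j) := by
  simp only [conv, LinearMap.comp_apply, TensorProduct.map_tmul, ← ra.eq, ← rb.eq]
  simp [TensorProduct.sum_tmul, TensorProduct.tmul_sum, TensorProduct.tensorTensorTensorComm_tmul]
  rw [Finset.sum_comm]

lemma repr_counit_smul_right {a : A} {ι : Type*} (r : Coalgebra.Repr k a ι) :
    ∑ i ∈ r.index, Coalgebra.counit (R := k) (r.left i) • r.right i = a := by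
  have h := congrArg (TensorProduct.lid k A) (Coalgebra.sum_counit_tmul_eq r)
  simp only [map_sum, TensorProduct.lid_tmul, one_smul] at h
  exact h

lemma repr_counit_smul_left {a : A} {ι : Type*} (r : Coalgebra.Repr k a ι) :
    ∑ i ∈ r.index, Coalgebra.counit (R := k) (r.right i) • r.left i = a := by
  have h := congrArg (TensorProduct.rid k A) (Coalgebra.sum_tmul_counit_eq r)
  simp only [map_sum, TensorProduct.rid_tmul, one_smul] at h
  exact h

/-- The convolution unit `η ∘ ε` on `A ⊗ A`. -/
noncomputable def cunit : A ⊗[k] A →ₗ[k] A :=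
  Algebra.linearMap k A ∘ₗ Coalgebra.counit ∘ₗ LinearMap.mul' k A

lemma cunit_tmul (a b : A) :
    (cunit : A ⊗[k] A →ₗ[k] A) (a ⊗ₜ[k] b) =
      algebraMap k A (Coalgebra.counit (R := k) a * Coalgebra.counit (R := k) b) := by
  simp [cunit, Bialgebra.counit_mul]

lemma conv_cunit_left (f : A ⊗[k] A →ₗ[k] A) : conv cunit f = f := by
  apply TensorProduct.ext'
  intro a b
  rw [conv_tmul cunit f a b (ℛ k a) (ℛ k b)]
  have : ∀ i ∈ (ℛ k a).index, ∀ j ∈ (ℛ k b).index,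
      (cunit : A ⊗[k] A →ₗ[k] A) ((ℛ k a).left i ⊗ₜ[k] (ℛ k b).left j) *
        f ((ℛ k a).right i ⊗ₜ[k] (ℛ k b).right j) =
      f ((Coalgebra.counit (R := k) ((ℛ k a).left i) • (ℛ k a).right i) ⊗ₜ[k]
          (Coalgebra.counit (R := k) ((ℛ k b).left j) • (ℛ k b).right j)) := by
    intro i _ j _
    rw [cunit_tmul, ← Algebra.smul_def]
    simp only [TensorProduct.smul_tmul', TensorProduct.tmul_smul, map_smul, mul_smul]
    simp only [← TensorProduct.smul_tmul', map_smul]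
    rw [smul_comm]
  calc ∑ i ∈ (ℛ k a).index, ∑ j ∈ (ℛ k b).index,
        (cunit : A ⊗[k] A →ₗ[k] A) ((ℛ k a).left i ⊗ₜ[k] (ℛ k b).left j) *
          f ((ℛ k a).right i ⊗ₜ[k] (ℛ k b).right j)
      = f ((∑ i ∈ (ℛ k a).index, Coalgebra.counit (R := k) ((ℛ k a).left i) • (ℛ k a).right i)
          ⊗ₜ[k] (∑ j ∈ (ℛ k b).index,
            Coalgebra.counit (R := k) ((ℛ k b).left j) • (ℛ k b).right j)) := by
        rw [Finset.sum_congr rfl (fun i hi => Finset.sum_congr rfl (fun j hj => this i hi j hj))]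
        rw [TensorProduct.sum_tmul]
        simp only [TensorProduct.tmul_sum, map_sum]
    _ = f (a ⊗ₜ[k] b) := by rw [repr_counit_smul_right, repr_counit_smul_right]

lemma conv_cunit_right (f : A ⊗[k] A →ₗ[k] A) : conv f cunit = f := by
  apply TensorProduct.ext'
  intro a b
  rw [conv_tmul f cunit a b (ℛ k a) (ℛ k b)]
  have : ∀ i ∈ (ℛ k a).index, ∀ j ∈ (ℛ k b).index,
      f ((ℛ k a).left i ⊗ₜ[k] (ℛ k b).left j) *
        (cunit : A ⊗[k] A →ₗ[k] A) ((ℛ k a).right i ⊗ₜ[k] (ℛ k b).right j) =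
      f ((Coalgebra.counit (R := k) ((ℛ k a).right i) • (ℛ k a).left i) ⊗ₜ[k]
          (Coalgebra.counit (R := k) ((ℛ k b).right j) • (ℛ k b).left j)) := by
    intro i _ j _
    rw [cunit_tmul, mul_comm (f _) _, ← Algebra.smul_def]
    simp only [TensorProduct.smul_tmul', TensorProduct.tmul_smul, map_smul, mul_smul]
    simp only [← TensorProduct.smul_tmul', map_smul]
    rw [smul_comm]
  calc ∑ i ∈ (ℛ k a).index, ∑ j ∈ (ℛ k b).index,
        f ((ℛ k a).left i ⊗ₜ[k] (ℛ k b).left j) *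
          (cunit : A ⊗[k] A →ₗ[k] A) ((ℛ k a).right i ⊗ₜ[k] (ℛ k b).right j)
      = f ((∑ i ∈ (ℛ k a).index, Coalgebra.counit (R := k) ((ℛ k a).right i) • (ℛ k a).left i)
          ⊗ₜ[k] (∑ j ∈ (ℛ k b).index,
            Coalgebra.counit (R := k) ((ℛ k b).right j) • (ℛ k b).left j)) := by
        rw [Finset.sum_congr rfl (fun i hi => Finset.sum_congr rfl (fun j hj => this i hi j hj))]
        rw [TensorProduct.sum_tmul]
        simp only [TensorProduct.tmul_sum, map_sum]
    _ = f (a ⊗ₜ[k] b) := by rw [repr_counit_smul_left, repr_counit_smul_left]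

noncomputable def aAux (f g h : A ⊗[k] A →ₗ[k] A) :
    (A ⊗[k] (A ⊗[k] A)) ⊗[k] (A ⊗[k] (A ⊗[k] A)) →ₗ[k] A :=
  LinearMap.mul' k A ∘ₗ LinearMap.lTensor A (LinearMap.mul' k A) ∘ₗ
  TensorProduct.map f (TensorProduct.map g h) ∘ₗ
  LinearMap.lTensor (A ⊗[k] A) (TensorProduct.tensorTensorTensorComm k A A A A).toLinearMap ∘ₗ
  (TensorProduct.tensorTensorTensorComm k A (A ⊗[k] A) A (A ⊗[k] A)).toLinearMap

lemma aAux_tmul (f g h : A ⊗[k] A →ₗ[k] A) (x y z u v w : A) :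
    aAux f g h ((x ⊗ₜ[k] (y ⊗ₜ[k] z)) ⊗ₜ[k] (u ⊗ₜ[k] (v ⊗ₜ[k] w))) =
      f (x ⊗ₜ[k] u) * (g (y ⊗ₜ[k] v) * h (z ⊗ₜ[k] w)) := by
  simp [aAux, TensorProduct.tensorTensorTensorComm_tmul]

lemma conv_assoc (f g h : A ⊗[k] A →ₗ[k] A) :
    conv (conv f g) h = conv f (conv g h) := by
  apply TensorProduct.ext'
  intro a b
  have ra := ℛ k a
  have rb := ℛ k b
  let a₁ : (i : ra.ι) → Coalgebra.Repr k (ra.left i) (A × A) := fun i => ℛ k (ra.left i)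
  let a₂ : (i : ra.ι) → Coalgebra.Repr k (ra.right i) (A × A) := fun i => ℛ k (ra.right i)
  let b₁ : (j : rb.ι) → Coalgebra.Repr k (rb.left j) (A × A) := fun j => ℛ k (rb.left j)
  let b₂ : (j : rb.ι) → Coalgebra.Repr k (rb.right j) (A × A) := fun j => ℛ k (rb.right j)
  have Ha := Coalgebra.sum_tmul_tmul_eq ra a₁ a₂
  have Hb := Coalgebra.sum_tmul_tmul_eq rb b₁ b₂
  have E := congrArg (aAux f g h) (congrArg₂ (· ⊗ₜ[k] ·) Ha Hb)
  simp only [TensorProduct.sum_tmul, TensorProduct.tmul_sum, map_sum, aAux_tmul] at E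
  calc conv (conv f g) h (a ⊗ₜ[k] b)
      = ∑ i ∈ ra.index, ∑ j ∈ rb.index,
          (∑ p ∈ (a₁ i).index, ∑ r ∈ (b₁ j).index,
            f ((a₁ i).left p ⊗ₜ[k] (b₁ j).left r) * g ((a₁ i).right p ⊗ₜ[k] (b₁ j).right r)) *
          h (ra.right i ⊗ₜ[k] rb.right j) := by
        rw [conv_tmul _ _ a b ra rb]
        exact Finset.sum_congr rfl fun i _ => Finset.sum_congr rfl fun j _ => by
          rw [conv_tmul f g _ _ (a₁ i) (b₁ j)]
    _ = ∑ i ∈ ra.index, ∑ p ∈ (a₁ i).index, ∑ j ∈ rb.index, ∑ r ∈ (b₁ j).index,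
          f ((a₁ i).left p ⊗ₜ[k] (b₁ j).left r) *
            (g ((a₁ i).right p ⊗ₜ[k] (b₁ j).right r) * h (ra.right i ⊗ₜ[k] rb.right j)) := by
        simp only [Finset.sum_mul, mul_assoc]
        exact Finset.sum_congr rfl fun i _ => Finset.sum_comm
    _ = ∑ j ∈ rb.index, ∑ r ∈ (b₁ j).index, ∑ i ∈ ra.index, ∑ p ∈ (a₁ i).index,
          f ((a₁ i).left p ⊗ₜ[k] (b₁ j).left r) *
            (g ((a₁ i).right p ⊗ₜ[k] (b₁ j).right r) * h (ra.right i ⊗ₜ[k] rb.right j)) :=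
        HSD_sum4_comm _ _ _ _ _
    _ = ∑ j ∈ rb.index, ∑ s ∈ (b₂ j).index, ∑ i ∈ ra.index, ∑ q ∈ (a₂ i).index,
          f (ra.left i ⊗ₜ[k] rb.left j) *
            (g ((a₂ i).left q ⊗ₜ[k] (b₂ j).left s) * h ((a₂ i).right q ⊗ₜ[k] (b₂ j).right s)) := E
    _ = ∑ i ∈ ra.index, ∑ q ∈ (a₂ i).index, ∑ j ∈ rb.index, ∑ s ∈ (b₂ j).index,
          f (ra.left i ⊗ₜ[k] rb.left j) *
            (g ((a₂ i).left q ⊗ₜ[k] (b₂ j).left s) * h ((a₂ i).right q ⊗ₜ[k] (b₂ j).right s)) :=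
        HSD_sum4_comm _ _ _ _ _
    _ = conv f (conv g h) (a ⊗ₜ[k] b) := by
        rw [conv_tmul f (conv g h) a b ra rb]
        refine (Finset.sum_congr rfl fun i _ => ?_).symm
        rw [Finset.sum_comm]
        refine Finset.sum_congr rfl fun j _ => ?_
        rw [conv_tmul g h _ _ (a₂ i) (b₂ j), Finset.mul_sum]
        exact Finset.sum_congr rfl fun q _ => by rw [Finset.mul_sum]

/-- A representation of `comul (a*b)` built from representations of `a` and `b`. -/
noncomputable def mulRepr {a b : A} {ι₁ ι₂ : Type*} (ra : Coalgebra.Repr k a ι₁)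
    (rb : Coalgebra.Repr k b ι₂) :
    Coalgebra.Repr k (a * b) (ι₁ × ι₂) where
  index := ra.index ×ˢ rb.index
  left := fun p => ra.left p.1 * rb.left p.2
  right := fun p => ra.right p.1 * rb.right p.2
  eq := by
    rw [Finset.sum_product, Bialgebra.comul_mul, ← ra.eq, ← rb.eq, Finset.sum_mul_sum]
    simp [Algebra.TensorProduct.tmul_mul_tmul]

noncomputable def nu : A ⊗[k] A →ₗ[k] A := HopfAlgebra.antipode k ∘ₗ LinearMap.mul' k A

noncomputable def rho : A ⊗[k] A →ₗ[k] A :=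
  LinearMap.mul' k A ∘ₗ TensorProduct.map (HopfAlgebra.antipode k) (HopfAlgebra.antipode k) ∘ₗ
    (TensorProduct.comm k A A).toLinearMap

lemma conv_nu_mul : conv (nu : A ⊗[k] A →ₗ[k] A) (LinearMap.mul' k A) = cunit := by
  apply TensorProduct.ext'
  intro a b
  rw [conv_tmul _ _ a b (ℛ k a) (ℛ k b)]
  have key := HopfAlgebra.sum_antipode_mul_eq_algebraMap_counit (R := k) (mulRepr (ℛ k a) (ℛ k b))
  simp only [mulRepr] at key
  rw [Finset.sum_product] at key
  simp only [nu, LinearMap.comp_apply, LinearMap.mul'_apply, cunit]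
  rw [key]
  simp

lemma conv_mul_rho : conv (LinearMap.mul' k A) (rho : A ⊗[k] A →ₗ[k] A) = cunit := by
  apply TensorProduct.ext'
  intro a b
  rw [conv_tmul _ _ a b (ℛ k a) (ℛ k b)]
  have inner := HopfAlgebra.sum_mul_antipode_eq_smul (R := k) (ℛ k b)
  have outer := HopfAlgebra.sum_mul_antipode_eq_smul (R := k) (ℛ k a)
  simp only [rho, LinearMap.comp_apply, LinearMap.mul'_apply, LinearEquiv.coe_coe,
    TensorProduct.comm_tmul, TensorProduct.map_tmul]
  calc ∑ i ∈ (ℛ k a).index, ∑ j ∈ (ℛ k b).index,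
        (ℛ k a).left i * (ℛ k b).left j *
          (HopfAlgebra.antipode (R := k) ((ℛ k b).right j) *
            HopfAlgebra.antipode (R := k) ((ℛ k a).right i))
      = ∑ i ∈ (ℛ k a).index,
          ((ℛ k a).left i *
            (∑ j ∈ (ℛ k b).index,
              (ℛ k b).left j * HopfAlgebra.antipode (R := k) ((ℛ k b).right j)) *
            HopfAlgebra.antipode (R := k) ((ℛ k a).right i)) := by
        refine Finset.sum_congr rfl fun i _ => ?_
        rw [Finset.mul_sum, Finset.sum_mul]
        exact Finset.sum_congr rfl fun j _ => by ring
    _ = Coalgebra.counit (R := k) b •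
          ∑ i ∈ (ℛ k a).index,
            (ℛ k a).left i * HopfAlgebra.antipode (R := k) ((ℛ k a).right i) := by
        rw [inner, Finset.smul_sum]
        exact Finset.sum_congr rfl fun i _ => by
          rw [mul_smul_comm, smul_mul_assoc, mul_one]
    _ = (cunit : A ⊗[k] A →ₗ[k] A) (a ⊗ₜ[k] b) := by
        rw [outer, cunit]
        simp only [LinearMap.comp_apply, LinearMap.mul'_apply, Bialgebra.counit_mul,
          Algebra.linearMap_apply]
        rw [smul_smul, mul_comm, Algebra.smul_def, mul_one]

lemma antipode_mul_antidistrib (a b : A) :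
    HopfAlgebra.antipode (R := k) (a * b) =
      HopfAlgebra.antipode (R := k) b * HopfAlgebra.antipode (R := k) a := by
  have hnr : (nu : A ⊗[k] A →ₗ[k] A) = rho := by
    calc (nu : A ⊗[k] A →ₗ[k] A)
        = conv nu cunit := (conv_cunit_right _).symm
      _ = conv nu (conv (LinearMap.mul' k A) rho) := by rw [conv_mul_rho]
      _ = conv (conv nu (LinearMap.mul' k A)) rho := (conv_assoc _ _ _).symm
      _ = conv cunit rho := by rw [conv_nu_mul]
      _ = rho := conv_cunit_left _
  have h := LinearMap.congr_fun hnr (a ⊗ₜ[k] b)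
  simpa [nu, rho] using h

end HSDaux

end AuxHopf


/-- Let `(∂⁽ⁱ⁾)ᵢ` be a Hasse–Schmidt derivation on a Hopf algebra `A` which is compatible
with the Hopf structure:  `Δ(∂⁽ⁱ⁾a) = Σⱼ (∂⁽ʲ⁾ ⊗ ∂⁽ⁱ⁻ʲ⁾)(Δa)`, `S(∂⁽ⁱ⁾a) = ∂⁽ⁱ⁾(Sa)`, and
`ε(∂⁽ⁱ⁾a) = 0` whenever `i ≥ 1` and `ε(a) = 0`.  If an ideal `I` is stable under all the
`∂⁽ⁱ⁾`, then so is the largest Hopf ideal `H(I)` contained in `I`. -/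
theorem largestHopfIdealIn_stable_of_hasseSchmidt {k A : Type*} [CommRing k] [CommRing A]
    [HopfAlgebra k A] (D : ℕ → A →ₗ[k] A)
    (hD0 : D 0 = LinearMap.id)
    (hLeib : ∀ (i : ℕ) (a b : A),
      D i (a * b) = ∑ j ∈ Finset.range (i + 1), D j a * D (i - j) b)
    (hcomul : ∀ (i : ℕ) (a : A), Coalgebra.comul (R := k) (D i a) =
      ∑ j ∈ Finset.range (i + 1),
        TensorProduct.map (D j) (D (i - j)) (Coalgebra.comul (R := k) a))
    (hanti : ∀ (i : ℕ) (a : A),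
      HopfAlgebra.antipode (R := k) (D i a) = D i (HopfAlgebra.antipode (R := k) a))
    (hcounit : ∀ (i : ℕ) (a : A), 1 ≤ i → Coalgebra.counit (R := k) a = 0 →
      Coalgebra.counit (R := k) (D i a) = 0)
    (I : Ideal A) (hI : ∀ (i : ℕ), ∀ a ∈ I, D i a ∈ I) :
    ∀ (i : ℕ), ∀ a ∈ largestHopfIdealIn k I, D i a ∈ largestHopfIdealIn k I := by
  
  classical
  let K : Ideal A → Submodule k (A ⊗[k] A) := fun J =>
    Submodule.map₂ (TensorProduct.mk k A A) (J.restrictScalars k) (⊤ : Submodule k A) ⊔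
    Submodule.map₂ (TensorProduct.mk k A A) (⊤ : Submodule k A) (J.restrictScalars k)
  have Kmono : ∀ {J J' : Ideal A}, J ≤ J' → K J ≤ K J' := fun h =>
    sup_le_sup (Submodule.map₂_le_map₂_left fun x hx => h hx)
      (Submodule.map₂_le_map₂_right fun x hx => h hx)
  -- `H(I)` is contained in `I`
  have hHle : largestHopfIdealIn k I ≤ I := sSup_le fun J hJ => hJ.2
  -- any Hopf ideal contained in `I` is contained in `H(I)`
  have hle_sSup : ∀ J : {J : Ideal A // IsHopfIdeal k J ∧ J ≤ I},
      (J : Ideal A) ≤ largestHopfIdealIn k I := fun J => le_sSup J.2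
  have memH : ∀ {x : A}, x ∈ largestHopfIdealIn k I →
      x ∈ ⨆ J : {J : Ideal A // IsHopfIdeal k J ∧ J ≤ I}, (J : Ideal A) := by
    intro x hx
    rwa [largestHopfIdealIn, sSup_eq_iSup'] at hx
  -- `H(I)` is a Hopf ideal
  have hHcomul : ∀ a ∈ largestHopfIdealIn k I,
      Coalgebra.comul (R := k) a ∈ K (largestHopfIdealIn k I) := by
    intro a ha
    refine Submodule.iSup_induction
      (motive := fun y => Coalgebra.comul (R := k) y ∈ K (largestHopfIdealIn k I)) _ (memH ha)
      (fun J x hx => ?_) ?_ (fun x y hx hy => ?_)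
    · exact Kmono (hle_sSup J) (J.2.1.1 x hx)
    · show Coalgebra.comul (R := k) (0 : A) ∈ K (largestHopfIdealIn k I)
      rw [map_zero]; exact zero_mem _
    · show Coalgebra.comul (R := k) (x + y) ∈ K (largestHopfIdealIn k I)
      rw [map_add]; exact add_mem hx hy
  have hHcounit : ∀ a ∈ largestHopfIdealIn k I, Coalgebra.counit (R := k) a = 0 := by
    intro a ha
    refine Submodule.iSup_induction
      (motive := fun y => Coalgebra.counit (R := k) y = 0) _ (memH ha)
      (fun J x hx => ?_) ?_ (fun x y hx hy => ?_)
    · exact J.2.1.2.1 x hx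
    · show Coalgebra.counit (R := k) (0 : A) = 0
      rw [map_zero]
    · show Coalgebra.counit (R := k) (x + y) = 0
      rw [map_add, show Coalgebra.counit (R := k) x = 0 from hx,
        show Coalgebra.counit (R := k) y = 0 from hy, add_zero]
  have hHanti : ∀ a ∈ largestHopfIdealIn k I,
      HopfAlgebra.antipode (R := k) a ∈ largestHopfIdealIn k I := by
    intro a ha
    refine Submodule.iSup_induction
      (motive := fun y => HopfAlgebra.antipode (R := k) y ∈ largestHopfIdealIn k I) _ (memH ha)
      (fun J x hx => ?_) ?_ (fun x y hx hy => ?_)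
    · exact hle_sSup J (J.2.1.2.2 x hx)
    · show HopfAlgebra.antipode (R := k) (0 : A) ∈ largestHopfIdealIn k I
      rw [map_zero]; exact zero_mem _
    · show HopfAlgebra.antipode (R := k) (x + y) ∈ largestHopfIdealIn k I
      rw [map_add]; exact add_mem hx hy
  -- the ideal generated by the image of `H(I)` under all the `D n`
  set s : Set A := {x | ∃ n : ℕ, ∃ b ∈ largestHopfIdealIn k I, D n b = x} with hs
  set J : Ideal A := Ideal.span s with hJdef
  have hgen : ∀ (n : ℕ), ∀ b ∈ largestHopfIdealIn k I, D n b ∈ J := fun n b hb =>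
    Ideal.subset_span ⟨n, b, hb, rfl⟩
  have hJI : J ≤ I := Ideal.span_le.2 (by rintro x ⟨n, b, hb, rfl⟩; exact hI n b (hHle hb))
  -- counit vanishes on J
  have hJcounit : ∀ x ∈ J, Coalgebra.counit (R := k) x = 0 := by
    have hker : J ≤ RingHom.ker (Bialgebra.counitAlgHom k A) := by
      refine Ideal.span_le.2 ?_
      rintro x ⟨n, b, hb, rfl⟩
      rw [SetLike.mem_coe, RingHom.mem_ker, Bialgebra.counitAlgHom_apply]
      cases n with
      | zero => rw [hD0, LinearMap.id_apply]; exact hHcounit b hb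
      | succ m => exact hcounit (m + 1) b (Nat.le_add_left 1 m) (hHcounit b hb)
    intro x hx
    have := hker hx
    rwa [RingHom.mem_ker, Bialgebra.counitAlgHom_apply] at this
  -- J is stable under the antipode
  have hJanti : ∀ x ∈ J, HopfAlgebra.antipode (R := k) x ∈ J := by
    intro x hx
    refine Submodule.span_induction
      (p := fun y _ => HopfAlgebra.antipode (R := k) y ∈ J) ?_ ?_ ?_ ?_ hx
    · rintro y ⟨n, b, hb, rfl⟩
      show HopfAlgebra.antipode (R := k) (D n b) ∈ J
      rw [hanti]
      exact hgen n _ (hHanti b hb)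
    · show HopfAlgebra.antipode (R := k) (0 : A) ∈ J
      rw [map_zero]; exact zero_mem _
    · intro y z _ _ hy hz
      show HopfAlgebra.antipode (R := k) (y + z) ∈ J
      rw [map_add]
      exact add_mem hy hz
    · intro r y _ hy
      show HopfAlgebra.antipode (R := k) (r • y) ∈ J
      rw [smul_eq_mul, HSDaux.antipode_mul_antidistrib]
      exact Ideal.mul_mem_right _ _ hy
  -- K J is an ideal of A ⊗ A
  have Kmul : ∀ (t : A ⊗[k] A), ∀ u ∈ K J, t * u ∈ K J := by
    intro t
    induction t using TensorProduct.induction_on with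
    | zero => intro u hu; rw [zero_mul]; exact zero_mem _
    | tmul c d =>
      intro u hu
      have h1 : Submodule.map₂ (TensorProduct.mk k A A) (J.restrictScalars k)
          (⊤ : Submodule k A) ≤
          Submodule.comap (LinearMap.mulLeft k (c ⊗ₜ[k] d))
            (Submodule.map₂ (TensorProduct.mk k A A) (J.restrictScalars k)
              (⊤ : Submodule k A)) := by
        refine Submodule.map₂_le.2 fun x hx y _ => ?_
        rw [Submodule.mem_comap]
        have : (LinearMap.mulLeft k (c ⊗ₜ[k] d)) (TensorProduct.mk k A A x y)
            = TensorProduct.mk k A A (c * x) (d * y) := by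
          simp [Algebra.TensorProduct.tmul_mul_tmul]
        rw [this]
        exact Submodule.apply_mem_map₂ _
          (by simpa using J.mul_mem_left c (by simpa using hx)) trivial
      have h2 : Submodule.map₂ (TensorProduct.mk k A A) (⊤ : Submodule k A)
          (J.restrictScalars k) ≤
          Submodule.comap (LinearMap.mulLeft k (c ⊗ₜ[k] d))
            (Submodule.map₂ (TensorProduct.mk k A A) (⊤ : Submodule k A)
              (J.restrictScalars k)) := by
        refine Submodule.map₂_le.2 fun x _ y hy => ?_
        rw [Submodule.mem_comap]
        have : (LinearMap.mulLeft k (c ⊗ₜ[k] d)) (TensorProduct.mk k A A x y)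
            = TensorProduct.mk k A A (c * x) (d * y) := by
          simp [Algebra.TensorProduct.tmul_mul_tmul]
        rw [this]
        exact Submodule.apply_mem_map₂ _ trivial
          (by simpa using J.mul_mem_left d (by simpa using hy))
      rcases Submodule.mem_sup.1 hu with ⟨u1, hu1, u2, hu2, rfl⟩
      rw [mul_add]
      exact add_mem (Submodule.mem_sup_left (h1 hu1)) (Submodule.mem_sup_right (h2 hu2))
    | add t1 t2 ih1 ih2 =>
      intro u hu
      rw [add_mul]
      exact add_mem (ih1 u hu) (ih2 u hu)
  -- the maps D p ⊗ D q send K H(I) into K J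
  have hmapK : ∀ (p q : ℕ), ∀ u ∈ K (largestHopfIdealIn k I),
      TensorProduct.map (D p) (D q) u ∈ K J := by
    intro p q u hu
    have h1 : Submodule.map₂ (TensorProduct.mk k A A)
        ((largestHopfIdealIn k I).restrictScalars k) (⊤ : Submodule k A) ≤
        Submodule.comap (TensorProduct.map (D p) (D q))
          (Submodule.map₂ (TensorProduct.mk k A A) (J.restrictScalars k)
            (⊤ : Submodule k A)) := by
      refine Submodule.map₂_le.2 fun x hx y _ => ?_
      rw [Submodule.mem_comap]
      have : (TensorProduct.map (D p) (D q)) (TensorProduct.mk k A A x y)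
          = TensorProduct.mk k A A (D p x) (D q y) := by simp
      rw [this]
      exact Submodule.apply_mem_map₂ _ (by simpa using hgen p x (by simpa using hx)) trivial
    have h2 : Submodule.map₂ (TensorProduct.mk k A A) (⊤ : Submodule k A)
        ((largestHopfIdealIn k I).restrictScalars k) ≤
        Submodule.comap (TensorProduct.map (D p) (D q))
          (Submodule.map₂ (TensorProduct.mk k A A) (⊤ : Submodule k A)
            (J.restrictScalars k)) := by
      refine Submodule.map₂_le.2 fun x _ y hy => ?_
      rw [Submodule.mem_comap]
      have : (TensorProduct.map (D p) (D q)) (TensorProduct.mk k A A x y)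
          = TensorProduct.mk k A A (D p x) (D q y) := by simp
      rw [this]
      exact Submodule.apply_mem_map₂ _ trivial (by simpa using hgen q y (by simpa using hy))
    rcases Submodule.mem_sup.1 hu with ⟨u1, hu1, u2, hu2, rfl⟩
    rw [map_add]
    exact add_mem (Submodule.mem_sup_left (h1 hu1)) (Submodule.mem_sup_right (h2 hu2))
  -- J is a coideal
  have hJcomul : ∀ x ∈ J, Coalgebra.comul (R := k) x ∈ K J := by
    intro x hx
    refine Submodule.span_induction
      (p := fun y _ => Coalgebra.comul (R := k) y ∈ K J) ?_ ?_ ?_ ?_ hx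
    · rintro y ⟨n, b, hb, rfl⟩
      show Coalgebra.comul (R := k) (D n b) ∈ K J
      rw [hcomul]
      exact Submodule.sum_mem _ fun j _ => hmapK j (n - j) _ (hHcomul b hb)
    · show Coalgebra.comul (R := k) (0 : A) ∈ K J
      rw [map_zero]; exact zero_mem _
    · intro y z _ _ hy hz
      show Coalgebra.comul (R := k) (y + z) ∈ K J
      rw [map_add]
      exact add_mem hy hz
    · intro r y _ hy
      show Coalgebra.comul (R := k) (r • y) ∈ K J
      rw [smul_eq_mul, Bialgebra.comul_mul]
      exact Kmul _ _ hy
  have hJHopf : IsHopfIdeal k J := ⟨hJcomul, hJcounit, hJanti⟩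
  have hJleH : J ≤ largestHopfIdealIn k I := le_sSup ⟨hJHopf, hJI⟩
  intro i a ha
  exact hJleH (hgen i a ha)
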